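/- Define the binary cross entropy loss with soft label q ∈ [0,1] by BCE_q(z) = −[q·log σ(z) + (1−q)·log(1−σ(z))], where σ(z) = 1/(1+e^{−z}) is the sigmoid function. Then for all q ∈ [0,1] and all z ∈ ℝ, the product-stability α_{BCE_q}(z) = 3(BCE_q'''(z))² − BCE_q''''(z)·BCE_q''(z) is strictly positive. -/

import Mathlib

/-- The sigmoid function `σ(z) = 1/(1 + e^{-z})`. -/
noncomputable def sigmoid (z : ℝ) : ℝ := 1 / (1 + Real.exp (-z))

/-- Binary cross entropy loss with soft label `q`. -/
noncomputable def BCE (q : ℝ) (z : ℝ) : ℝ :=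
  -(q * Real.log (sigmoid z) + (1 - q) * Real.log (1 - sigmoid z))

lemma one_add_exp_pos (z : ℝ) : 0 < 1 + Real.exp (-z) := by positivity

lemma sigmoid_pos (z : ℝ) : 0 < sigmoid z := by
  unfold sigmoid; positivity

lemma sigmoid_lt_one (z : ℝ) : sigmoid z < 1 := by
  unfold sigmoid
  rw [div_lt_one (one_add_exp_pos z)]
  linarith [Real.exp_pos (-z)]

lemma one_sub_sigmoid (z : ℝ) : 1 - sigmoid z = Real.exp (-z) / (1 + Real.exp (-z)) := by
  unfold sigmoid
  field_simp
  ring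

lemma bce_eq (q : ℝ) : BCE q = fun z => Real.log (1 + Real.exp (-z)) + (1 - q) * z := by
  funext z
  unfold BCE sigmoid
  have h1 : (0:ℝ) < 1 + Real.exp (-z) := one_add_exp_pos z
  have h2 : Real.log (1 / (1 + Real.exp (-z))) = -Real.log (1 + Real.exp (-z)) := by
    rw [one_div, Real.log_inv]
  have h3 : (1:ℝ) - 1 / (1 + Real.exp (-z)) = Real.exp (-z) / (1 + Real.exp (-z)) := by
    field_simp
    ring
  rw [h2, h3, Real.log_div (Real.exp_ne_zero _) (ne_of_gt h1), Real.log_exp]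
  ring

lemma hasDerivAt_sigmoid (z : ℝ) :
    HasDerivAt sigmoid (sigmoid z * (1 - sigmoid z)) z := by
  have h1 : (0:ℝ) < 1 + Real.exp (-z) := one_add_exp_pos z
  have hd : HasDerivAt (fun z : ℝ => 1 + Real.exp (-z)) (-Real.exp (-z)) z := by
    simpa using (Real.hasDerivAt_exp (-z)).comp z (hasDerivAt_neg z) |>.const_add 1
  have := hd.inv (ne_of_gt h1)
  have heq : -(-Real.exp (-z)) / (1 + Real.exp (-z)) ^ 2
      = sigmoid z * (1 - sigmoid z) := by
    rw [one_sub_sigmoid]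
    unfold sigmoid
    field_simp
  rw [heq] at this
  exact this.congr_of_eventuallyEq (Filter.Eventually.of_forall (fun y => by
    simp only [sigmoid, one_div, Pi.inv_apply]))

lemma hasDerivAt_bce (q z : ℝ) : HasDerivAt (BCE q) (sigmoid z - q) z := by
  rw [bce_eq]
  have h1 : (0:ℝ) < 1 + Real.exp (-z) := one_add_exp_pos z
  have hd : HasDerivAt (fun z : ℝ => 1 + Real.exp (-z)) (-Real.exp (-z)) z := by
    simpa using (Real.hasDerivAt_exp (-z)).comp z (hasDerivAt_neg z) |>.const_add 1
  have hlog := (hd.log (ne_of_gt h1))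
  have hlin : HasDerivAt (fun z : ℝ => (1 - q) * z) (1 - q) z := by
    simpa using (hasDerivAt_id z).const_mul (1 - q)
  have := hlog.add hlin
  refine this.congr_deriv ?_
  have h := one_sub_sigmoid z
  rw [neg_div]
  linarith

lemma hasDerivAt_g2 (z : ℝ) :
    HasDerivAt (fun z => sigmoid z * (1 - sigmoid z))
      (sigmoid z * (1 - sigmoid z) * (1 - 2 * sigmoid z)) z := by
  have hs := hasDerivAt_sigmoid z
  have := hs.mul ((hasDerivAt_const z (1:ℝ)).sub hs)
  refine this.congr_deriv ?_
  simp only [Pi.sub_apply]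
  ring

lemma hasDerivAt_g3 (z : ℝ) :
    HasDerivAt (fun z => sigmoid z * (1 - sigmoid z) * (1 - 2 * sigmoid z))
      (sigmoid z * (1 - sigmoid z) * (1 - 6 * sigmoid z + 6 * (sigmoid z) ^ 2)) z := by
  have hs := hasDerivAt_sigmoid z
  have hg2 := hasDerivAt_g2 z
  have := hg2.mul ((hasDerivAt_const z (1:ℝ)).sub (hs.const_mul 2))
  refine this.congr_deriv ?_
  simp only [Pi.sub_apply]
  ring

lemma deriv1 (q : ℝ) : deriv (BCE q) = fun z => sigmoid z - q := by
  funext z; exact (hasDerivAt_bce q z).deriv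

lemma deriv2 (q : ℝ) : deriv (deriv (BCE q)) = fun z => sigmoid z * (1 - sigmoid z) := by
  rw [deriv1]
  funext z
  have : HasDerivAt (fun z => sigmoid z - q) (sigmoid z * (1 - sigmoid z)) z := by
    simpa using (hasDerivAt_sigmoid z).sub_const q
  exact this.deriv

lemma iterated2 (q : ℝ) :
    iteratedDeriv 2 (BCE q) = fun z => sigmoid z * (1 - sigmoid z) := by
  rw [iteratedDeriv_succ, iteratedDeriv_one, deriv2]

lemma iterated3 (q : ℝ) :
    iteratedDeriv 3 (BCE q)
      = fun z => sigmoid z * (1 - sigmoid z) * (1 - 2 * sigmoid z) := by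
  rw [iteratedDeriv_succ, iterated2]
  funext z
  exact (hasDerivAt_g2 z).deriv

lemma iterated4 (q : ℝ) :
    iteratedDeriv 4 (BCE q)
      = fun z => sigmoid z * (1 - sigmoid z) * (1 - 6 * sigmoid z + 6 * (sigmoid z) ^ 2) := by
  rw [iteratedDeriv_succ, iterated3]
  funext z
  exact (hasDerivAt_g3 z).deriv

/-- The binary cross entropy loss is product-stable everywhere. -/
theorem bce_product_stable (q : ℝ) (hq0 : 0 ≤ q) (hq1 : q ≤ 1) (z : ℝ) :
    0 < 3 * (iteratedDeriv 3 (BCE q) z) ^ 2 -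
        iteratedDeriv 4 (BCE q) z * iteratedDeriv 2 (BCE q) z := by
  rw [iterated2, iterated3, iterated4]
  dsimp only
  set s := sigmoid z with hs
  have h0 : 0 < s := sigmoid_pos z
  have h1 : s < 1 := sigmoid_lt_one z
  nlinarith [sq_nonneg (s * (1 - s) * (2 * s - 1)), mul_pos h0 (sub_pos.mpr h1),
    sq_nonneg (2 * s - 1), mul_pos (mul_pos h0 (sub_pos.mpr h1)) (mul_pos h0 (sub_pos.mpr h1))]
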